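/- arXiv:1106.0057 — 3 statements merged into one kernel-verified Lean document; each statement's English description precedes it below -/
import Mathlib

section
/- Let p be prime and let M be the 3×3 matrix over Z/pZ given by rows [(i1-i2, i2-i5, 0), (i1-i6, 0, i6-i4), (0, i5-i3, i3-i4)], where the integers i1,...,i6 satisfy the check-consistency conditions that i1≠i2, i2≠i5, i1≠i5, i1≠i6, i6≠i4, i1≠i4, i5≠i3, i3≠i4, i5≠i4 (all mod p). If det(M) ≡ 0 (mod p) and u = (u2,u3,u4) is a nonzero vector in the null space of M over Z/pZ, then all coordinates u2, u3, u4 are nonzero and pairwise distinct in Z/pZ. -/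
/-- For the cycle consistency matrix of the (4,8) absorbing set of a
column-weight-5 SCB LDPC code, under the check-consistency conditions,
any nonzero null-space vector has all coordinates nonzero and pairwise
distinct in `ℤ/pℤ`. -/
theorem ccm48_null_vector_coords (p : ℕ) [Fact p.Prime]
    (i1 i2 i3 i4 i5 i6 : ZMod p)
    (h12 : i1 ≠ i2) (h25 : i2 ≠ i5) (h15 : i1 ≠ i5)
    (h16 : i1 ≠ i6) (h64 : i6 ≠ i4) (h14 : i1 ≠ i4)
    (h53 : i5 ≠ i3) (h34 : i3 ≠ i4) (h54 : i5 ≠ i4)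
    (M : Matrix (Fin 3) (Fin 3) (ZMod p))
    (hM : M = !![i1 - i2, i2 - i5, 0;
                 i1 - i6, 0, i6 - i4;
                 0, i5 - i3, i3 - i4])
    (hdet : M.det = 0)
    (u : Fin 3 → ZMod p) (hu : M.mulVec u = 0) (hne : u ≠ 0) :
    u 0 ≠ 0 ∧ u 1 ≠ 0 ∧ u 2 ≠ 0 ∧ u 0 ≠ u 1 ∧ u 0 ≠ u 2 ∧ u 1 ≠ u 2 := by
  subst hM
  have e1 := congrFun hu 0
  have e2 := congrFun hu 1
  have e3 := congrFun hu 2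
  simp [Matrix.mulVec, dotProduct, Fin.sum_univ_three] at e1 e2 e3
  have ha : i1 - i2 ≠ 0 := sub_ne_zero.mpr h12
  have hb : i2 - i5 ≠ 0 := sub_ne_zero.mpr h25
  have hc : i1 - i6 ≠ 0 := sub_ne_zero.mpr h16
  have hd : i6 - i4 ≠ 0 := sub_ne_zero.mpr h64
  have he : i5 - i3 ≠ 0 := sub_ne_zero.mpr h53
  have hf : i3 - i4 ≠ 0 := sub_ne_zero.mpr h34
  have hab : i1 - i5 ≠ 0 := sub_ne_zero.mpr h15
  have hcd : i1 - i4 ≠ 0 := sub_ne_zero.mpr h14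
  have hef : i5 - i4 ≠ 0 := sub_ne_zero.mpr h54
  -- first: u 0 ≠ 0
  have h0 : u 0 ≠ 0 := by
    intro h
    rw [h] at e1 e2
    have h1 : u 1 = 0 := by
      have : (i2 - i5) * u 1 = 0 := by linear_combination e1
      exact (mul_eq_zero.mp this).resolve_left hb
    have h2 : u 2 = 0 := by
      have : (i6 - i4) * u 2 = 0 := by linear_combination e2
      exact (mul_eq_zero.mp this).resolve_left hd
    apply hne
    funext i
    fin_cases i <;> assumption
  have h1 : u 1 ≠ 0 := by
    intro h
    apply h0
    rw [h] at e1
    have : (i1 - i2) * u 0 = 0 := by linear_combination e1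
    exact (mul_eq_zero.mp this).resolve_left ha
  have h2 : u 2 ≠ 0 := by
    intro h
    apply h0
    rw [h] at e2
    have : (i1 - i6) * u 0 = 0 := by linear_combination e2
    exact (mul_eq_zero.mp this).resolve_left hc
  refine ⟨h0, h1, h2, ?_, ?_, ?_⟩
  · intro h
    apply h0
    have : (i1 - i5) * u 0 = 0 := by linear_combination e1 + (i2 - i5) * h
    exact (mul_eq_zero.mp this).resolve_left hab
  · intro h
    apply h0
    have : (i1 - i4) * u 0 = 0 := by linear_combination e2 + (i6 - i4) * h
    exact (mul_eq_zero.mp this).resolve_left hcd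
  · intro h
    apply h1
    have : (i5 - i4) * u 1 = 0 := by linear_combination e3 + (i3 - i4) * h
    exact (mul_eq_zero.mp this).resolve_left hef
end

section
/- For all primes p > 17, there are no pairwise distinct x, y, z, w ∈ {0, 1, 2, 3, 4} such that (z−x)(w−y) + (z−y)(w−x) ≡ 0 (mod p). -/
/-- For all primes `p > 17`, there are no pairwise distinct
`x, y, z, w ∈ {0,1,2,3,4}` with `(z−x)(w−y) + (z−y)(w−x) ≡ 0 (mod p)`. -/
theorem no_48_assignment1_solution (p : ℕ) (hp : p.Prime) (hp17 : 17 < p)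
    (x y z w : ℤ)
    (hx : x ∈ ({0, 1, 2, 3, 4} : Set ℤ)) (hy : y ∈ ({0, 1, 2, 3, 4} : Set ℤ))
    (hz : z ∈ ({0, 1, 2, 3, 4} : Set ℤ)) (hw : w ∈ ({0, 1, 2, 3, 4} : Set ℤ))
    (hxy : x ≠ y) (hxz : x ≠ z) (hxw : x ≠ w)
    (hyz : y ≠ z) (hyw : y ≠ w) (hzw : z ≠ w) :
    ¬ ((p : ℤ) ∣ ((z - x) * (w - y) + (z - y) * (w - x))) := by
  intro hdvd
  have key : ((z - x) * (w - y) + (z - y) * (w - x)) ≠ 0 ∧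
      -17 ≤ ((z - x) * (w - y) + (z - y) * (w - x)) ∧
      ((z - x) * (w - y) + (z - y) * (w - x)) ≤ 17 := by
    clear hdvd hp hp17
    simp only [Set.mem_insert_iff, Set.mem_singleton_iff] at hx hy hz hw
    rcases hx with rfl|rfl|rfl|rfl|rfl <;> rcases hy with rfl|rfl|rfl|rfl|rfl <;>
      rcases hz with rfl|rfl|rfl|rfl|rfl <;> rcases hw with rfl|rfl|rfl|rfl|rfl <;>
      omega
  have hle : (p : ℤ) ≤ |((z - x) * (w - y) + (z - y) * (w - x))| :=
    Int.le_of_dvd (abs_pos.mpr key.1) ((dvd_abs _ _).mpr hdvd)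
  have h2 : |((z - x) * (w - y) + (z - y) * (w - x))| ≤ 17 :=
    abs_le.mpr ⟨key.2.1, key.2.2⟩
  have h3 : (17 : ℤ) < p := by exact_mod_cast hp17
  linarith
end

section
/- With row-selection values a = (0, 1, 2, 4, 6), for every prime p > 23 and for all injections assigning distinct values x, y, z, w, t from {0, 1, 2, 4, 6}: (z−x)(w−y) + (z−y)(w−x) ≢ 0 (mod p) whenever x,y,z,w are distinct, and (z−w)(x−t)(y−z) − (y−w)(x−z)(z−t) ≢ 0 (mod p) whenever x,y,z,w,t are distinct. -/
set_option maxRecDepth 10000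
set_option maxHeartbeats 4000000

lemma rsf_aux (p : ℕ) (hp : p.Prime) (hp23 : 23 < p) (n : ℤ)
    (hd : ∀ q < 217, 23 < q → q.Prime → ¬ q ∣ n.natAbs) (hb : n.natAbs < 217) (hn : n ≠ 0) :
    ¬ (p : ℤ) ∣ n := by
  intro h
  have h2 : p ∣ n.natAbs := by
    have := Int.natAbs_dvd_natAbs.mpr h
    simpa using this
  have hle : p ≤ n.natAbs := Nat.le_of_dvd (by simpa using hn) h2
  exact hd p (by omega) hp23 hp h2

lemma rsf_hd (m : ℕ) (h : ∀ q < 217, 23 < q → q ∣ m → ¬ q.Prime) :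
    ∀ q < 217, 23 < q → q.Prime → ¬ q ∣ m := fun q hq h1 hp hd => h q hq h1 hd hp

/-- With row-selection values `{0,1,2,4,6}`, for every prime `p > 23` and
distinct labels drawn from `{0,1,2,4,6}`, neither determinant condition of the
(4,8) absorbing set holds mod `p`. -/
theorem rsf01246_no_48 (p : ℕ) (hp : p.Prime) (hp23 : 23 < p)
    (x y z w t : ℤ)
    (hx : x ∈ ({0, 1, 2, 4, 6} : Set ℤ)) (hy : y ∈ ({0, 1, 2, 4, 6} : Set ℤ))
    (hz : z ∈ ({0, 1, 2, 4, 6} : Set ℤ)) (hw : w ∈ ({0, 1, 2, 4, 6} : Set ℤ))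
    (ht : t ∈ ({0, 1, 2, 4, 6} : Set ℤ)) :
    ((x ≠ y ∧ x ≠ z ∧ x ≠ w ∧ y ≠ z ∧ y ≠ w ∧ z ≠ w) →
      ¬ ((p : ℤ) ∣ ((z - x) * (w - y) + (z - y) * (w - x)))) ∧
    ((x ≠ y ∧ x ≠ z ∧ x ≠ w ∧ x ≠ t ∧ y ≠ z ∧ y ≠ w ∧ y ≠ t ∧
        z ≠ w ∧ z ≠ t ∧ w ≠ t) →
      ¬ ((p : ℤ) ∣ ((z - w) * (x - t) * (y - z) - (y - w) * (x - z) * (z - t)))) := by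
  simp only [Set.mem_insert_iff, Set.mem_singleton_iff] at hx hy hz hw ht
  refine ⟨fun hd => ?_, fun hd => ?_⟩ <;>
  rcases hx with rfl | rfl | rfl | rfl | rfl <;>
  rcases hy with rfl | rfl | rfl | rfl | rfl <;>
  rcases hz with rfl | rfl | rfl | rfl | rfl <;>
  rcases hw with rfl | rfl | rfl | rfl | rfl <;>
  first
  | (exfalso; omega)
  | exact rsf_aux p hp hp23 _ (rsf_hd _ (by decide)) (by decide) (by decide)
  | (rcases ht with rfl | rfl | rfl | rfl | rfl <;>
     first
     | (exfalso; omega)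
     | exact rsf_aux p hp hp23 _ (rsf_hd _ (by decide)) (by decide) (by decide))
end
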